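/- The 0-odometer O_0 is minimal: every orbit is dense. Equivalently, given any infinite word ω = (w_1, w_2, w_3, …) ∈ Σ_{≥0} and any finite word (v_1, v_2, …, v_k) with v_j ∈ ℕ_0, there exists n > 0 such that O_0^n(ω) begins with (v_1, v_2, …, v_k). -/
import Mathlib


/-- The `0`-odometer on the Baire-type space `ℕ₀^ℕ`:
`O₀(w₁,w₂,w₃,…) = (0,…,0 (w₁ times), w₂+1, w₃, …)`. -/
def baireOdometer (w : ℕ → ℕ) : ℕ → ℕ := fun i =>
  if i < w 0 then 0
  else if i = w 0 then w 1 + 1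
  else w (i - w 0 + 1)

namespace BOaux

/-- `marks w m = m + ∑_{j ≤ m} w j`: positions of the `0`s in the binary coding. -/
def marks (w : ℕ → ℕ) (m : ℕ) : ℕ := m + ∑ j ∈ Finset.range (m + 1), w j

open Classical in
/-- The (complemented) binary digits of the coding of `w`. -/
noncomputable def gdig (w : ℕ → ℕ) (i : ℕ) : ℕ :=
  if ∃ m, marks w m = i then 0 else 1

/-- Value of the first `L` binary digits. -/
noncomputable def val (L : ℕ) (w : ℕ → ℕ) : ℕ :=
  ∑ i ∈ Finset.range L, gdig w i * 2 ^ i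

lemma marks_zero (w : ℕ → ℕ) : marks w 0 = w 0 := by simp [marks]

lemma marks_succ (w : ℕ → ℕ) (m : ℕ) :
    marks w (m + 1) = marks w m + 1 + w (m + 1) := by
  simp [marks, Finset.sum_range_succ]; ring

lemma marks_strictMono (w : ℕ → ℕ) : StrictMono (marks w) :=
  strictMono_nat_of_lt_succ (fun n => by rw [marks_succ]; omega)

lemma w0_le_marks (w : ℕ → ℕ) (m : ℕ) : w 0 ≤ marks w m := by
  have := (marks_strictMono w).monotone (Nat.zero_le m)
  rw [marks_zero] at this; exact this

lemma gdig_le_one (w : ℕ → ℕ) (i : ℕ) : gdig w i ≤ 1 := by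
  unfold gdig; split <;> omega

lemma gdig_eq_zero_iff (w : ℕ → ℕ) (i : ℕ) :
    gdig w i = 0 ↔ ∃ m, marks w m = i := by
  unfold gdig; split <;> simp_all

lemma gdig_lt (w : ℕ → ℕ) {i : ℕ} (h : i < w 0) : gdig w i = 1 := by
  unfold gdig
  rw [if_neg]
  rintro ⟨m, hm⟩
  have := w0_le_marks w m
  omega

lemma gdig_at (w : ℕ → ℕ) : gdig w (w 0) = 0 :=
  (gdig_eq_zero_iff w _).mpr ⟨0, marks_zero w⟩

lemma od_apply_lt (w : ℕ → ℕ) {i : ℕ} (h : i < w 0) : baireOdometer w i = 0 := by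
  simp [baireOdometer, h]

lemma od_apply_eq (w : ℕ → ℕ) : baireOdometer w (w 0) = w 1 + 1 := by
  simp [baireOdometer]

lemma od_apply_gt (w : ℕ → ℕ) {i : ℕ} (h : w 0 < i) :
    baireOdometer w i = w (i - w 0 + 1) := by
  have h1 : ¬ i < w 0 := by omega
  have h2 : ¬ i = w 0 := by omega
  simp [baireOdometer, h1, h2]

lemma marks_od_lt (w : ℕ → ℕ) {m : ℕ} (h : m < w 0) :
    marks (baireOdometer w) m = m := by
  unfold marks
  have : ∑ j ∈ Finset.range (m + 1), baireOdometer w j = 0 := by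
    apply Finset.sum_eq_zero
    intro j hj
    rw [Finset.mem_range] at hj
    exact od_apply_lt w (by omega)
  omega

lemma marks_od_ge (w : ℕ → ℕ) (m : ℕ) :
    marks (baireOdometer w) (w 0 + m) = marks w (m + 1) := by
  induction m with
  | zero =>
    unfold marks
    rw [Finset.sum_range_succ, Finset.sum_range_succ, Finset.sum_range_one]
    have h1 : ∑ j ∈ Finset.range (w 0), baireOdometer w j = 0 :=
      Finset.sum_eq_zero (fun j hj => od_apply_lt w (Finset.mem_range.mp hj))
    rw [Nat.add_zero, od_apply_eq, h1]
    omega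
  | succ m ih =>
    have h1 : w 0 + (m + 1) = (w 0 + m) + 1 := by ring
    rw [h1, marks_succ, ih, marks_succ]
    have h2 : w 0 < w 0 + m + 1 := by omega
    rw [od_apply_gt w h2]
    have h3 : w 0 + m + 1 - w 0 + 1 = m + 2 := by omega
    rw [h3, marks_succ, marks_succ]

lemma gdig_od_lt (w : ℕ → ℕ) {i : ℕ} (h : i < w 0) :
    gdig (baireOdometer w) i = 0 :=
  (gdig_eq_zero_iff _ _).mpr ⟨i, marks_od_lt w h⟩

lemma gdig_od_at (w : ℕ → ℕ) : gdig (baireOdometer w) (w 0) = 1 := by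
  unfold gdig
  rw [if_neg]
  rintro ⟨m, hm⟩
  by_cases hlt : m < w 0
  · rw [marks_od_lt w hlt] at hm; omega
  · have hm' : m = w 0 + (m - w 0) := by omega
    rw [hm', marks_od_ge] at hm
    have h1 : marks w 0 < marks w (m - w 0 + 1) :=
      marks_strictMono w (by omega)
    rw [marks_zero] at h1
    omega

lemma gdig_od_gt (w : ℕ → ℕ) {i : ℕ} (h : w 0 < i) :
    gdig (baireOdometer w) i = gdig w i := by
  have hiff : (∃ m, marks (baireOdometer w) m = i) ↔ (∃ m, marks w m = i) := by
    constructor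
    · rintro ⟨m, hm⟩
      by_cases hlt : m < w 0
      · rw [marks_od_lt w hlt] at hm; omega
      · have hm' : m = w 0 + (m - w 0) := by omega
        rw [hm', marks_od_ge] at hm
        exact ⟨m - w 0 + 1, hm⟩
    · rintro ⟨t, ht⟩
      rcases t with _ | s
      · rw [marks_zero] at ht; omega
      · exact ⟨w 0 + s, by rw [marks_od_ge]; exact ht⟩
  by_cases hx : ∃ m, marks w m = i
  · have h2 : ∃ m, marks (baireOdometer w) m = i := hiff.mpr hx
    simp [gdig, hx, h2]
  · have h2 : ¬∃ m, marks (baireOdometer w) m = i := fun h => hx (hiff.mp h)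
    simp [gdig, hx, h2]

lemma sum_pow (L : ℕ) : ∑ i ∈ Finset.range L, 2 ^ i = 2 ^ L - 1 := by
  induction L with
  | zero => simp
  | succ L ih =>
    rw [Finset.sum_range_succ, ih]
    have : 1 ≤ 2 ^ L := Nat.one_le_two_pow
    omega

lemma bits_lt (L : ℕ) (d : ℕ → ℕ) (hd : ∀ i, d i ≤ 1) :
    ∑ i ∈ Finset.range L, d i * 2 ^ i < 2 ^ L := by
  have h1 : ∑ i ∈ Finset.range L, d i * 2 ^ i ≤ ∑ i ∈ Finset.range L, 2 ^ i := by
    apply Finset.sum_le_sum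
    intro i _
    calc d i * 2 ^ i ≤ 1 * 2 ^ i := Nat.mul_le_mul_right _ (hd i)
    _ = 2 ^ i := one_mul _
  rw [sum_pow] at h1
  have : 1 ≤ 2 ^ L := Nat.one_le_two_pow
  omega

lemma val_lt (L : ℕ) (w : ℕ → ℕ) : val L w < 2 ^ L :=
  bits_lt L _ (gdig_le_one w)

lemma val_succ (L : ℕ) (w : ℕ → ℕ) :
    val (L + 1) w = val L w + gdig w L * 2 ^ L := by
  unfold val
  rw [Finset.sum_range_succ]

lemma val_full {L : ℕ} (w : ℕ → ℕ) (h : L ≤ w 0) : val L w = 2 ^ L - 1 := by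
  unfold val
  have hc : ∀ i ∈ Finset.range L, gdig w i * 2 ^ i = 2 ^ i := by
    intro i hi
    rw [Finset.mem_range] at hi
    rw [gdig_lt w (by omega), one_mul]
  rw [Finset.sum_congr rfl hc, sum_pow]

lemma val_od_zero {L : ℕ} (w : ℕ → ℕ) (h : L ≤ w 0) :
    val L (baireOdometer w) = 0 := by
  apply Finset.sum_eq_zero
  intro i hi
  rw [Finset.mem_range] at hi
  rw [gdig_od_lt w (by omega)]
  ring

lemma val_add_one_lt {L : ℕ} (w : ℕ → ℕ) (h : w 0 < L) :
    val L w + 1 < 2 ^ L := by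
  have hmem : w 0 ∈ Finset.range L := Finset.mem_range.mpr h
  have h1 : val L w = ∑ i ∈ (Finset.range L).erase (w 0), gdig w i * 2 ^ i := by
    unfold val
    exact (Finset.sum_erase _ (by rw [gdig_at]; ring)).symm
  have h2 : ∑ i ∈ (Finset.range L).erase (w 0), gdig w i * 2 ^ i
      ≤ ∑ i ∈ (Finset.range L).erase (w 0), 2 ^ i := by
    apply Finset.sum_le_sum
    intro i _
    calc gdig w i * 2 ^ i ≤ 1 * 2 ^ i := Nat.mul_le_mul_right _ (gdig_le_one w i)
    _ = 2 ^ i := one_mul _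
  have h3 : 2 ^ w 0 + ∑ i ∈ (Finset.range L).erase (w 0), 2 ^ i
      = ∑ i ∈ Finset.range L, 2 ^ i := Finset.add_sum_erase _ _ hmem
  rw [sum_pow] at h3
  have h4 : 1 ≤ 2 ^ w 0 := Nat.one_le_two_pow
  have h5 : 1 ≤ 2 ^ L := Nat.one_le_two_pow
  omega

lemma val_od (L : ℕ) (w : ℕ → ℕ) :
    val L (baireOdometer w) = (val L w + 1) % 2 ^ L := by
  induction L with
  | zero => simp [val]
  | succ L ih =>
    have hpow : 2 ^ (L + 1) = 2 ^ L * 2 := pow_succ 2 L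
    have h5 : 1 ≤ 2 ^ L := Nat.one_le_two_pow
    rcases lt_trichotomy L (w 0) with hc | hc | hc
    · -- L < w 0, so L + 1 ≤ w 0
      rw [val_od_zero w (by omega), val_full w (by omega)]
      have : 2 ^ (L + 1) - 1 + 1 = 2 ^ (L + 1) := by
        have : 1 ≤ 2 ^ (L + 1) := Nat.one_le_two_pow
        omega
      rw [this, Nat.mod_self]
    · -- L = w 0
      subst hc
      rw [val_succ, val_succ, val_od_zero w le_rfl, val_full w le_rfl,
        gdig_od_at, gdig_at]
      simp only [zero_mul, one_mul, add_zero, zero_add]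
      have h6 : 2 ^ w 0 - 1 + 1 = 2 ^ w 0 := by omega
      have hlt : 2 ^ w 0 < 2 ^ (w 0 + 1) := by omega
      rw [h6, Nat.mod_eq_of_lt hlt]
    · -- w 0 < L
      rw [val_succ, val_succ, gdig_od_gt w hc, ih]
      have hlt := val_add_one_lt w hc
      rw [Nat.mod_eq_of_lt hlt]
      have hd : gdig w L = 0 ∨ gdig w L = 1 := by
        have := gdig_le_one w L
        omega
      have hvlt : val (L + 1) w + 1 ≤ 2 ^ (L + 1) := by
        have := val_lt (L + 1) w
        omega
      rcases hd with h | h <;> rw [h] <;>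
      · have hv : val (L + 1) w = val L w + gdig w L * 2 ^ L := val_succ L w
        rw [h] at hv
        rw [Nat.mod_eq_of_lt (by omega)]
        omega

lemma val_iter (L n : ℕ) (w : ℕ → ℕ) :
    val L ((baireOdometer)^[n] w) = (val L w + n) % 2 ^ L := by
  induction n with
  | zero => simp [Nat.mod_eq_of_lt (val_lt L w)]
  | succ n ih =>
    rw [Function.iterate_succ_apply', val_od, ih, Nat.mod_add_mod, ← Nat.add_assoc]

lemma bits_inj (L : ℕ) (d e : ℕ → ℕ) (hd : ∀ i, d i ≤ 1) (he : ∀ i, e i ≤ 1)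
    (hsum : ∑ i ∈ Finset.range L, d i * 2 ^ i = ∑ i ∈ Finset.range L, e i * 2 ^ i) :
    ∀ i < L, d i = e i := by
  induction L with
  | zero => intro i hi; omega
  | succ L ih =>
    intro i hi
    rw [Finset.sum_range_succ, Finset.sum_range_succ] at hsum
    have h1 := bits_lt L d hd
    have h2 := bits_lt L e he
    have hdL : d L = 0 ∨ d L = 1 := by have := hd L; omega
    have heL : e L = 0 ∨ e L = 1 := by have := he L; omega
    have htails : (∑ i ∈ Finset.range L, d i * 2 ^ i
        = ∑ i ∈ Finset.range L, e i * 2 ^ i) ∧ d L = e L := by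
      rcases hdL with h | h <;> rcases heL with h' | h' <;>
        rw [h, h'] at hsum <;> constructor <;> omega
    rcases Nat.lt_or_ge i L with hiL | hiL
    · exact ih htails.1 i hiL
    · have : i = L := by omega
      rw [this]; exact htails.2

lemma marks_congr {w u : ℕ → ℕ} {m : ℕ} (h : ∀ j ≤ m, w j = u j) :
    marks w m = marks u m := by
  unfold marks
  congr 1
  exact Finset.sum_congr rfl (fun j hj => h j (by
    have := Finset.mem_range.mp hj; omega))

lemma prefix_eq (k : ℕ) (w u : ℕ → ℕ)
    (hg : ∀ i, i ≤ marks u k → gdig w i = gdig u i) :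
    ∀ m, m ≤ k → w m = u m := by
  intro m
  induction m using Nat.strong_induction_on with
  | _ m ih =>
    intro hmk
    have hpre : ∀ j, j < m → w j = u j := fun j hj => ih j hj (by omega)
    have hmp : ∀ j, j < m → marks w j = marks u j := fun j hj =>
      marks_congr (fun t ht => hpre t (by omega))
    -- marks w m ≤ marks u m
    have h1 : marks w m ≤ marks u m := by
      have hmm : marks u m ≤ marks u k := (marks_strictMono u).monotone hmk
      have h0 : gdig w (marks u m) = 0 := by
        rw [hg _ hmm]
        exact (gdig_eq_zero_iff u _).mpr ⟨m, rfl⟩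
      obtain ⟨t, ht⟩ := (gdig_eq_zero_iff w _).mp h0
      have htm : m ≤ t := by
        by_contra hc
        push_neg at hc
        rw [hmp t hc] at ht
        have := marks_strictMono u hc
        omega
      have := (marks_strictMono w).monotone htm
      omega
    -- marks u m ≤ marks w m
    have h2 : marks u m ≤ marks w m := by
      have hwk : marks w m ≤ marks u k :=
        le_trans h1 ((marks_strictMono u).monotone hmk)
      have h0 : gdig u (marks w m) = 0 := by
        rw [← hg _ hwk]
        exact (gdig_eq_zero_iff w _).mpr ⟨m, rfl⟩
      obtain ⟨t, ht⟩ := (gdig_eq_zero_iff u _).mp h0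
      have htm : m ≤ t := by
        by_contra hc
        push_neg at hc
        rw [← hmp t hc] at ht
        have := marks_strictMono w hc
        omega
      have := (marks_strictMono u).monotone htm
      omega
    have heq : marks w m = marks u m := le_antisymm h1 h2
    -- extract w m = u m
    unfold marks at heq
    rw [Finset.sum_range_succ, Finset.sum_range_succ] at heq
    have hsum : ∑ j ∈ Finset.range m, w j = ∑ j ∈ Finset.range m, u j :=
      Finset.sum_congr rfl (fun j hj => hpre j (Finset.mem_range.mp hj))
    omega

lemma key (ω : ℕ → ℕ) (k : ℕ) (v : Fin k → ℕ) :
    ∃ n > 0, ∀ j : Fin k, (baireOdometer)^[n] ω (j : ℕ) = v j := by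
  rcases Nat.eq_zero_or_pos k with hk | hk
  · subst hk
    exact ⟨1, Nat.one_pos, fun j => absurd j.2 (by omega)⟩
  · set u : ℕ → ℕ := fun j => if h : j < k then v ⟨j, h⟩ else 0 with hu
    set L := marks u (k - 1) + 1 with hL
    have hq : val L ω < 2 ^ L := val_lt L ω
    have ht : val L u < 2 ^ L := val_lt L u
    refine ⟨2 ^ L - val L ω + val L u, by omega, ?_⟩
    set n := 2 ^ L - val L ω + val L u with hn
    have hval : val L ((baireOdometer)^[n] ω) = val L u := by
      rw [val_iter]
      have h1 : val L ω + n = 2 ^ L + val L u := by omega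
      rw [h1, Nat.add_mod_left, Nat.mod_eq_of_lt ht]
    have hdig : ∀ i, i ≤ marks u (k - 1) →
        gdig ((baireOdometer)^[n] ω) i = gdig u i := by
      intro i hi
      exact bits_inj L _ _ (gdig_le_one _) (gdig_le_one _) hval i (by omega)
    have hpref := prefix_eq (k - 1) _ u hdig
    intro j
    have hj : (j : ℕ) ≤ k - 1 := by have := j.2; omega
    rw [hpref j hj, hu]
    simp only [j.2, dif_pos]

end BOaux

/-- The `0`-odometer is minimal: every orbit is dense. Equivalently, for every
infinite word `ω` and every finite word `v = (v₁,…,v_k)` there is `n > 0` such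
that `O₀^n(ω)` begins with `v`. -/
theorem baireOdometer_minimal :
    (∀ ω : ℕ → ℕ, Dense (Set.range fun n : ℕ => (baireOdometer)^[n] ω)) ∧
      (∀ (ω : ℕ → ℕ) (k : ℕ) (v : Fin k → ℕ),
        ∃ n > 0, ∀ j : Fin k, (baireOdometer)^[n] ω (j : ℕ) = v j) := by
  constructor
  · intro ω
    rw [dense_iff_inter_open]
    intro U hU hne
    obtain ⟨x, hx⟩ := hne
    obtain ⟨I, uS, hIu, hsub⟩ := (isOpen_pi_iff.mp hU) x hx
    set k := I.sup id + 1 with hk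
    obtain ⟨n, hn, hmatch⟩ := BOaux.key ω k (fun j => x (j : ℕ))
    refine ⟨(baireOdometer)^[n] ω, ?_, ⟨n, rfl⟩⟩
    apply hsub
    intro i hi
    have hik : i < k := by
      have := Finset.le_sup (f := id) hi
      simp only [id] at this
      omega
    have := hmatch ⟨i, hik⟩
    simp only at this
    rw [this]
    exact (hIu i hi).2
  · exact BOaux.key
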